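/- Let C(k,j) denote the sum of signs over all (k−j, j−1)-unshuffles in S_{k−1}. Then for integers p > q ≥ 0, one has C(2p, 2q+1) = binomial(p−1, q). -/

import Mathlib

open scoped Classical

/-- Sum of the signs of all permutations of `Fin n` that are strictly increasing
on the first `m` positions and on the remaining `n - m` positions.
For `n = k - 1` and `m = k - j` these are the `(k-j, j-1)`-unshuffles. -/
noncomputable def unshuffleSignSum (n m : ℕ) : ℤ :=
  ∑ σ : Equiv.Perm (Fin n),
    if ((∀ i j : Fin n, i < j → (j : ℕ) < m → σ i < σ j) ∧
        (∀ i j : Fin n, i < j → m ≤ (i : ℕ) → σ i < σ j)) then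
      (Equiv.Perm.sign σ : ℤ) else 0

namespace UnshuffleAux

open Equiv Equiv.Perm Finset

def Cond (n m : ℕ) (σ : Perm (Fin n)) : Prop :=
  (∀ i j : Fin n, i < j → (j : ℕ) < m → σ i < σ j) ∧
  (∀ i j : Fin n, i < j → m ≤ (i : ℕ) → σ i < σ j)

lemma unshuffle_def (n m : ℕ) :
    unshuffleSignSum n m
      = ∑ σ : Perm (Fin n), if Cond n m σ then (Perm.sign σ : ℤ) else 0 := by
  simp only [unshuffleSignSum]
  refine Finset.sum_congr rfl fun σ _ => ?_
  by_cases h : Cond n m σ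
  · rw [if_pos h]; exact if_pos h
  · rw [if_neg h]; exact if_neg h

lemma perm_eq_one_of_strictMono {n : ℕ} {σ : Perm (Fin n)}
    (h : StrictMono (σ : Fin n → Fin n)) : σ = 1 := by
  have : (σ : Fin n → Fin n) = id :=
    (StrictMono.range_inj h strictMono_id).1
      (by rw [σ.surjective.range_eq, Set.range_id])
  exact Equiv.ext fun i => congrFun this i

lemma cond_iff_of_ge {n m : ℕ} (h : n ≤ m) (σ : Perm (Fin n)) :
    Cond n m σ ↔ σ = 1 := by
  constructor
  · rintro ⟨h1, -⟩
    exact perm_eq_one_of_strictMono fun i j hij => h1 i j hij (lt_of_lt_of_le j.isLt h)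
  · rintro rfl
    exact ⟨fun i j hij _ => hij, fun i j hij _ => hij⟩

lemma cond_zero_iff {n : ℕ} (σ : Perm (Fin n)) : Cond n 0 σ ↔ σ = 1 := by
  constructor
  · rintro ⟨-, h2⟩
    exact perm_eq_one_of_strictMono fun i j hij => h2 i j hij (Nat.zero_le _)
  · rintro rfl
    exact ⟨fun i j hij _ => hij, fun i j hij _ => hij⟩

lemma sum_base {n m : ℕ} (h : m = 0 ∨ n ≤ m) : unshuffleSignSum n m = 1 := by
  rw [unshuffle_def]
  have hiff : ∀ σ : Perm (Fin n), Cond n m σ ↔ σ = 1 := by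
    rcases h with rfl | h
    · exact cond_zero_iff
    · exact cond_iff_of_ge h
  have : ∀ σ : Perm (Fin n),
      (if Cond n m σ then (Perm.sign σ : ℤ) else 0)
        = if σ = 1 then (Perm.sign σ : ℤ) else 0 := by
    intro σ; by_cases hσ : σ = 1
    · rw [if_pos ((hiff σ).2 hσ), if_pos hσ]
    · rw [if_neg (fun hc => hσ ((hiff σ).1 hc)), if_neg hσ]
  rw [Finset.sum_congr rfl fun σ _ => this σ]
  rw [Finset.sum_ite_eq' Finset.univ (1 : Perm (Fin n))]
  simp

lemma min_pos {n m : ℕ} (hm : 1 ≤ m) {σ : Perm (Fin n)}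
    (hσ : Cond n m σ) {i : Fin n} (h0 : (σ i : ℕ) = 0) : (i : ℕ) = 0 ∨ (i : ℕ) = m := by
  by_contra hc
  push_neg at hc
  obtain ⟨hi0, him⟩ := hc
  have hlt : (i : ℕ) - 1 < n := by omega
  set j : Fin n := ⟨(i : ℕ) - 1, hlt⟩ with hj
  have hji : j < i := by
    rw [Fin.lt_def]; simp [hj]; omega
  have hlt2 : σ j < σ i := by
    rcases lt_or_ge (i : ℕ) m with h | h
    · exact hσ.1 j i hji h
    · exact hσ.2 j i hji (by simp [hj]; omega)
  rw [Fin.lt_def, h0] at hlt2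
  omega

lemma sum_fix_zero {n : ℕ} (cond : Perm (Fin (n + 1)) → Prop)
    (cond' : Perm (Fin n) → Prop)
    (h : ∀ e : Perm (Fin n), cond (Equiv.Perm.decomposeFin.symm (0, e)) ↔ cond' e) :
    (∑ σ : Perm (Fin (n + 1)), if σ 0 = 0 ∧ cond σ then (Perm.sign σ : ℤ) else 0)
      = ∑ e : Perm (Fin n), if cond' e then (Perm.sign e : ℤ) else 0 := by
  rw [← Equiv.sum_comp (Equiv.Perm.decomposeFin.symm :
      Fin (n + 1) × Perm (Fin n) ≃ Perm (Fin (n + 1)))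
      (fun σ => if σ 0 = 0 ∧ cond σ then (Perm.sign σ : ℤ) else 0)]
  rw [Fintype.sum_prod_type]
  rw [Finset.sum_eq_single (0 : Fin (n + 1))]
  · refine Finset.sum_congr rfl fun e _ => ?_
    by_cases hc : cond' e
    · rw [if_pos, if_pos hc]
      · simp
      · exact ⟨by simp, (h e).2 hc⟩
    · rw [if_neg, if_neg hc]
      rintro ⟨-, hc2⟩
      exact hc ((h e).1 hc2)
  · intro p _ hp
    refine Finset.sum_eq_zero fun e _ => ?_
    rw [if_neg]
    rintro ⟨h0, -⟩
    simp at h0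
    exact hp h0
  · simp


set_option maxHeartbeats 1000000 in
lemma condA_iff {n m : ℕ} (hm : 1 ≤ m) (e : Perm (Fin n)) :
    Cond (n + 1) m (Equiv.Perm.decomposeFin.symm (0, e)) ↔ Cond n (m - 1) e := by
  set σ := Equiv.Perm.decomposeFin.symm (0, e) with hσ
  have hsucc : ∀ x : Fin n, σ x.succ = (e x).succ := by
    intro x
    rw [hσ, Equiv.Perm.decomposeFin_symm_apply_succ, Equiv.swap_self]
    rfl
  have h0 : σ 0 = 0 := Equiv.Perm.decomposeFin_symm_apply_zero 0 e
  constructor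
  · rintro ⟨h1, h2⟩
    constructor
    · intro i j hij hj
      have := h1 i.succ j.succ (by simpa using hij)
        (by rw [Fin.val_succ]; omega)
      rw [hsucc, hsucc] at this
      simpa using this
    · intro i j hij hi
      have := h2 i.succ j.succ (by simpa using hij)
        (by rw [Fin.val_succ]; omega)
      rw [hsucc, hsucc] at this
      simpa using this
  · rintro ⟨h1, h2⟩
    constructor
    · intro i j hij hj
      rcases Fin.eq_zero_or_eq_succ j with rfl | ⟨j', rfl⟩
      · exact absurd hij (Fin.not_lt_zero i)
      rcases Fin.eq_zero_or_eq_succ i with rfl | ⟨i', rfl⟩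
      · rw [h0, hsucc]
        exact Fin.succ_pos _
      · rw [hsucc, hsucc]
        rw [Fin.succ_lt_succ_iff] at hij ⊢
        exact h1 i' j' hij (by rw [Fin.val_succ] at hj; omega)
    · intro i j hij hi
      rcases Fin.eq_zero_or_eq_succ i with rfl | ⟨i', rfl⟩
      · simp at hi; omega
      rcases Fin.eq_zero_or_eq_succ j with rfl | ⟨j', rfl⟩
      · exact absurd hij (Fin.not_lt_zero _)
      · rw [hsucc, hsucc]
        rw [Fin.succ_lt_succ_iff] at hij ⊢
        exact h2 i' j' hij (by rw [Fin.val_succ] at hi; omega)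

set_option maxHeartbeats 1000000 in
lemma condB_abstract {n m : ℕ} (hm : 1 ≤ m) (hmn : m ≤ n) (e : Perm (Fin n))
    (σ : Perm (Fin (n + 1)))
    (hlt : ∀ x : Fin (n + 1), (x : ℕ) < m → ∀ h : (x : ℕ) < n,
      (σ x : ℕ) = (e ⟨(x : ℕ), h⟩ : ℕ) + 1)
    (hMap : ∀ x : Fin (n + 1), (x : ℕ) = m → (σ x : ℕ) = 0)
    (hgt : ∀ x : Fin (n + 1), m < (x : ℕ) → ∀ h : (x : ℕ) - 1 < n,
      (σ x : ℕ) = (e ⟨(x : ℕ) - 1, h⟩ : ℕ) + 1) :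
    Cond (n + 1) m σ ↔ Cond n m e := by
  constructor
  · rintro ⟨h1, h2⟩
    constructor
    · intro i j hij hj
      have hij' : (i : ℕ) < (j : ℕ) := hij
      have hi : (i : ℕ) < m := lt_trans hij' hj
      have key := h1 ⟨(i : ℕ), by omega⟩ ⟨(j : ℕ), by omega⟩
        (by rw [Fin.lt_def]; exact hij') hj
      rw [Fin.lt_def] at key ⊢
      rw [hlt ⟨(i : ℕ), by omega⟩ hi i.isLt, hlt ⟨(j : ℕ), by omega⟩ hj j.isLt] at key
      simp only [Fin.eta] at key
      omega
    · intro i j hij hi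
      have hij' : (i : ℕ) < (j : ℕ) := hij
      have key := h2 ⟨(i : ℕ) + 1, by omega⟩ ⟨(j : ℕ) + 1, by omega⟩
        (by rw [Fin.lt_def]; simpa) (by simpa using Nat.le_succ_of_le hi)
      rw [Fin.lt_def] at key ⊢
      rw [hgt ⟨(i : ℕ) + 1, by omega⟩ (by simpa using Nat.lt_succ_of_le hi) (by simp),
          hgt ⟨(j : ℕ) + 1, by omega⟩ (by simp; omega) (by simp)] at key
      simp only [Nat.add_sub_cancel, Fin.eta] at key
      omega
  · rintro ⟨h1, h2⟩
    constructor
    · intro x y hxy hy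
      have hxy' : (x : ℕ) < (y : ℕ) := hxy
      have hx : (x : ℕ) < m := lt_trans hxy' hy
      have key := h1 ⟨(x : ℕ), by omega⟩ ⟨(y : ℕ), by omega⟩
        (by rw [Fin.lt_def]; exact hxy') hy
      rw [Fin.lt_def] at key ⊢
      rw [hlt x hx (by omega), hlt y hy (by omega)]
      omega
    · intro x y hxy hx
      have hxy' : (x : ℕ) < (y : ℕ) := hxy
      rw [Fin.lt_def]
      rcases eq_or_lt_of_le hx with hx' | hx'
      · rw [hMap x hx'.symm, hgt y (by omega) (by have := y.isLt; omega)]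
        omega
      · have key := h2 ⟨(x : ℕ) - 1, by omega⟩ ⟨(y : ℕ) - 1, by omega⟩
          (by rw [Fin.lt_def]; simp; omega) (by simp; omega)
        rw [Fin.lt_def] at key
        rw [hgt x hx' (by have := x.isLt; omega), hgt y (by omega) (by have := y.isLt; omega)]
        omega

lemma condB_iff {n m : ℕ} (hm : 1 ≤ m) (hmn : m ≤ n) (e : Perm (Fin n)) :
    Cond (n + 1) m
      (Equiv.Perm.decomposeFin.symm (0, e) * Fin.cycleRange ⟨m, by omega⟩)
      ↔ Cond n m e := by
  have hsucc : ∀ x : Fin n,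
      Equiv.Perm.decomposeFin.symm (0, e) x.succ = (e x).succ := by
    intro x
    rw [Equiv.Perm.decomposeFin_symm_apply_succ, Equiv.swap_self]
    rfl
  refine condB_abstract hm hmn e _ ?_ ?_ ?_
  · intro x hx h
    rw [Perm.mul_apply]
    have hcx : Fin.cycleRange (⟨m, by omega⟩ : Fin (n + 1)) x = x + 1 :=
      Fin.cycleRange_of_lt (by rw [Fin.lt_def]; exact hx)
    have hx1 : x + 1 = (⟨(x : ℕ), h⟩ : Fin n).succ := by
      apply Fin.ext
      rw [Fin.val_add_one_of_lt (by rw [Fin.lt_def]; simp [Fin.last]; omega)]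
      simp
    rw [hcx, hx1, hsucc, Fin.val_succ]
  · intro x hx
    have hxM : x = (⟨m, by omega⟩ : Fin (n + 1)) := Fin.ext hx
    rw [Perm.mul_apply, hxM, Fin.cycleRange_self]
    rw [Equiv.Perm.decomposeFin_symm_apply_zero]
    rfl
  · intro x hx h
    rw [Perm.mul_apply]
    have hcx : Fin.cycleRange (⟨m, by omega⟩ : Fin (n + 1)) x = x :=
      Fin.cycleRange_of_gt (by rw [Fin.lt_def]; exact hx)
    have hx1 : x = (⟨(x : ℕ) - 1, h⟩ : Fin n).succ := by
      apply Fin.ext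
      simp; omega
    rw [hcx]
    conv_lhs => rw [hx1]
    rw [hsucc, Fin.val_succ]


lemma recurrence {n m : ℕ} (hm : 1 ≤ m) (hmn : m ≤ n) :
    unshuffleSignSum (n + 1) m = unshuffleSignSum n (m - 1) + (-1) ^ m * unshuffleSignSum n m := by
  have hMlt : m < n + 1 := by omega
  rw [unshuffle_def]
  have split : ∀ σ : Perm (Fin (n + 1)),
      (if Cond (n + 1) m σ then (Perm.sign σ : ℤ) else 0)
        = (if σ 0 = 0 ∧ Cond (n + 1) m σ then (Perm.sign σ : ℤ) else 0)
          + (if σ ⟨m, hMlt⟩ = 0 ∧ Cond (n + 1) m σ then (Perm.sign σ : ℤ) else 0) := by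
    intro σ
    by_cases hP : Cond (n + 1) m σ
    · have h0 : ((σ (σ.symm 0) : ℕ)) = 0 := by simp
      rcases min_pos hm hP h0 with h | h
      · have h1 : σ 0 = 0 := by
          have h2 : σ.symm 0 = 0 := Fin.ext h
          have := σ.apply_symm_apply 0
          rwa [h2] at this
        have h2 : ¬ (σ ⟨m, hMlt⟩ = 0) := by
          intro hcon
          have heq := σ.injective (h1.trans hcon.symm)
          have := congrArg Fin.val heq
          simp at this
          omega
        rw [if_pos hP, if_pos ⟨h1, hP⟩, if_neg (fun hx => h2 hx.1), add_zero]
      · have h1 : σ ⟨m, hMlt⟩ = 0 := by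
          have h2 : σ.symm 0 = ⟨m, hMlt⟩ := Fin.ext h
          have := σ.apply_symm_apply 0
          rwa [h2] at this
        have h2 : ¬ (σ 0 = 0) := by
          intro hcon
          have heq := σ.injective (hcon.trans h1.symm)
          have := congrArg Fin.val heq
          simp at this
          omega
        rw [if_pos hP, if_neg (fun hx => h2 hx.1), if_pos ⟨h1, hP⟩, zero_add]
    · rw [if_neg hP, if_neg (fun hx => hP hx.2), if_neg (fun hx => hP hx.2), add_zero]
  rw [Finset.sum_congr rfl fun σ _ => split σ, Finset.sum_add_distrib]
  congr 1
  · rw [sum_fix_zero _ _ (condA_iff hm), unshuffle_def]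
  · have hcomp := Equiv.sum_comp (Equiv.mulRight (Fin.cycleRange ⟨m, hMlt⟩))
      (fun σ : Perm (Fin (n + 1)) =>
        if σ ⟨m, hMlt⟩ = 0 ∧ Cond (n + 1) m σ then (Perm.sign σ : ℤ) else 0)
    rw [← hcomp]
    have hsign : ∀ τ : Perm (Fin (n + 1)),
        (Perm.sign (τ * Fin.cycleRange ⟨m, hMlt⟩) : ℤ) = (-1) ^ m * Perm.sign τ := by
      intro τ
      rw [map_mul, Fin.sign_cycleRange]
      push_cast
      ring
    have step : ∀ τ : Perm (Fin (n + 1)),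
        (if (Equiv.mulRight (Fin.cycleRange ⟨m, hMlt⟩) τ) ⟨m, hMlt⟩ = 0 ∧
            Cond (n + 1) m (Equiv.mulRight (Fin.cycleRange ⟨m, hMlt⟩) τ) then
          (Perm.sign (Equiv.mulRight (Fin.cycleRange ⟨m, hMlt⟩) τ) : ℤ) else 0)
          = (-1) ^ m *
            (if τ 0 = 0 ∧ Cond (n + 1) m (τ * Fin.cycleRange ⟨m, hMlt⟩) then
              (Perm.sign τ : ℤ) else 0) := by
      intro τ
      have hτc : Equiv.mulRight (Fin.cycleRange ⟨m, hMlt⟩) τ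
          = τ * Fin.cycleRange ⟨m, hMlt⟩ := rfl
      rw [hτc]
      have hM0 : (τ * Fin.cycleRange ⟨m, hMlt⟩) ⟨m, hMlt⟩ = τ 0 := by
        rw [Perm.mul_apply, Fin.cycleRange_self]
      rw [hM0]
      by_cases hcond : τ 0 = 0 ∧ Cond (n + 1) m (τ * Fin.cycleRange ⟨m, hMlt⟩)
      · rw [if_pos hcond, if_pos hcond, hsign τ]
      · rw [if_neg hcond, if_neg hcond, mul_zero]
    rw [Finset.sum_congr rfl fun τ _ => step τ, ← Finset.mul_sum]
    congr 1
    rw [sum_fix_zero (fun τ => Cond (n + 1) m (τ * Fin.cycleRange ⟨m, hMlt⟩)) (Cond n m)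
      (condB_iff hm hmn), unshuffle_def]

/-- closed form -/
def V (n m : ℕ) : ℤ := if Even n ∧ ¬ Even m then 0 else ((n / 2).choose (m / 2) : ℤ)

lemma V_base_zero (n : ℕ) : V n 0 = 1 := by
  simp [V]

lemma V_diag (n : ℕ) : V n n = 1 := by
  rcases Nat.even_or_odd n with h | h
  · simp [V, h]
  · have : ¬ Even n := Nat.not_even_iff_odd.2 h
    simp [V, this]

lemma V_rec {n m : ℕ} (hm : 1 ≤ m) (hmn : m ≤ n) :
    V (n + 1) m = V n (m - 1) + (-1) ^ m * V n m := by
  rcases Nat.even_or_odd n with ⟨a, ha⟩ | ⟨a, ha⟩ <;>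
    rcases Nat.even_or_odd m with ⟨b, hb⟩ | ⟨b, hb⟩ <;> subst ha <;> subst hb
  · -- n = 2a, m = 2b
    have hb1 : 1 ≤ b := by omega
    have e1 : ¬ (Even (a + a + 1) ∧ ¬ Even (b + b)) := by
      simp [Nat.even_add_one, Nat.even_add]
    have e2 : Even (a + a) ∧ ¬ Even (b + b - 1) := by
      constructor
      · exact ⟨a, rfl⟩
      · simp [Nat.even_sub (by omega : 1 ≤ b + b), Nat.even_add]
    have e3 : ¬ (Even (a + a) ∧ ¬ Even (b + b)) := by
      simp [Nat.even_add]
    simp only [V, if_neg e1, if_pos e2, if_neg e3]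
    have : (-1 : ℤ) ^ (b + b) = 1 := Even.neg_one_pow ⟨b, rfl⟩
    rw [this]
    have h1 : (a + a + 1) / 2 = a := by omega
    have h2 : (a + a) / 2 = a := by omega
    rw [h1, h2]
    ring
  · -- n = 2a, m = 2b+1
    have e1 : ¬ (Even (a + a + 1) ∧ ¬ Even (2 * b + 1)) := by
      simp [Nat.even_add_one, Nat.even_add]
    have e2 : ¬ (Even (a + a) ∧ ¬ Even (2 * b + 1 - 1)) := by
      simp [Nat.even_add]
    have e3 : Even (a + a) ∧ ¬ Even (2 * b + 1) := by
      refine ⟨⟨a, rfl⟩, by simp [Nat.even_add_one, parity_simps]⟩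
    simp only [V, if_neg e1, if_neg e2, if_pos e3]
    have : (-1 : ℤ) ^ (2 * b + 1) = -1 := Odd.neg_one_pow ⟨b, by ring⟩
    rw [this]
    have h1 : (a + a + 1) / 2 = a := by omega
    have h2 : (a + a) / 2 = a := by omega
    have h3 : (2 * b + 1) / 2 = b := by omega
    have h4 : (2 * b + 1 - 1) / 2 = b := by omega
    rw [h1, h2, h3, h4]
    ring
  · -- n = 2a+1, m = 2b
    have hb1 : 1 ≤ b := by omega
    have e1 : ¬ (Even (2 * a + 1 + 1) ∧ ¬ Even (b + b)) := by
      simp [Nat.even_add]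
    have e2 : ¬ (Even (2 * a + 1) ∧ ¬ Even (b + b - 1)) := by
      simp [Nat.even_add_one, parity_simps]
    have e3 : ¬ (Even (2 * a + 1) ∧ ¬ Even (b + b)) := by
      simp [Nat.even_add_one, parity_simps]
    simp only [V, if_neg e1, if_neg e2, if_neg e3]
    have : (-1 : ℤ) ^ (b + b) = 1 := Even.neg_one_pow ⟨b, rfl⟩
    rw [this]
    have h1 : (2 * a + 1 + 1) / 2 = a + 1 := by omega
    have h2 : (2 * a + 1) / 2 = a := by omega
    have h3 : (b + b) / 2 = b := by omega
    have h4 : (b + b - 1) / 2 = b - 1 := by omega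
    rw [h1, h2, h3, h4]
    obtain ⟨b', rfl⟩ : ∃ b', b = b' + 1 := ⟨b - 1, by omega⟩
    rw [one_mul]
    rw [Nat.add_sub_cancel, Nat.choose_succ_succ]
    push_cast
    ring
  · -- n = 2a+1, m = 2b+1
    have e1 : Even (2 * a + 1 + 1) ∧ ¬ Even (2 * b + 1) := by
      constructor
      · exact ⟨a + 1, by ring⟩
      · simp [Nat.even_add_one, parity_simps]
    have e2 : ¬ (Even (2 * a + 1) ∧ ¬ Even (2 * b + 1 - 1)) := by
      simp [Nat.even_add_one, parity_simps]
    have e3 : ¬ (Even (2 * a + 1) ∧ ¬ Even (2 * b + 1)) := by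
      simp [Nat.even_add_one, parity_simps]
    simp only [V, if_pos e1, if_neg e2, if_neg e3]
    have : (-1 : ℤ) ^ (2 * b + 1) = -1 := Odd.neg_one_pow ⟨b, by ring⟩
    rw [this]
    have h2 : (2 * a + 1) / 2 = a := by omega
    have h3 : (2 * b + 1) / 2 = b := by omega
    have h4 : (2 * b + 1 - 1) / 2 = b := by omega
    rw [h2, h3, h4]
    ring

lemma main (n : ℕ) : ∀ m : ℕ, m ≤ n → unshuffleSignSum n m = V n m := by
  induction n with
  | zero =>
    intro m hm
    interval_cases m
    rw [sum_base (Or.inl rfl), V_base_zero]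
  | succ n ih =>
    intro m hm
    rcases Nat.eq_zero_or_pos m with rfl | hm1
    · rw [sum_base (Or.inl rfl), V_base_zero]
    rcases eq_or_lt_of_le hm with rfl | hm2
    · rw [sum_base (Or.inr le_rfl), V_diag]
    have hmn : m ≤ n := by omega
    rw [recurrence hm1 hmn, V_rec hm1 hmn, ih (m - 1) (by omega), ih m hmn]


end UnshuffleAux

/-- `C(k, j)` for `k = 2p`, `j = 2q + 1`: the signed count equals `C(p-1, q)`. -/
theorem unshuffle_count_even_odd (p q : ℕ) (h : q < p) :
    unshuffleSignSum (2 * p - 1) (2 * p - (2 * q + 1)) = ((p - 1).choose q : ℤ) := by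
  have h1 : 2 * p - (2 * q + 1) ≤ 2 * p - 1 := by omega
  rw [UnshuffleAux.main _ _ h1]
  unfold UnshuffleAux.V
  have hodd : ¬ Even (2 * p - 1) := by
    have : 2 * p - 1 = 2 * (p - 1) + 1 := by omega
    rw [this]; simp [Nat.even_add_one, parity_simps]
  rw [if_neg (fun hx => hodd hx.1)]
  have h2 : (2 * p - 1) / 2 = p - 1 := by omega
  have h3 : (2 * p - (2 * q + 1)) / 2 = p - 1 - q := by omega
  rw [h2, h3, ← Nat.choose_symm (by omega : q ≤ p - 1)]
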